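/- For each ε ∈ (0,1], let (u_ε, v_ε) solve the ODE system with initial data u_ε(0) = exp(φ⁰_ε/ε) and v_ε(0) = v⁰_ε, where ε u_ε(0) + Q(v⁰_ε) ≤ Q_M for a constant Q_M, φ⁰_ε → φ⁰ < 0 and v⁰_ε → v⁰ > μ as ε → 0. Let v⁰_− ∈ (0,μ) be the unique solution of Q(v⁰_−) = Q(v⁰) with v⁰_− < μ, and set τ = −φ⁰/(v⁰ − μ) > 0. Then for every t with 0 ≤ t < τ, v_ε(t) → v⁰ as ε → 0, and for every t > τ, v_ε(t) → v⁰_− as ε → 0. -/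

import Mathlib

open Real Filter Topology

/-- `(u, v)` solves the ODE system `u' = ε⁻¹ u (v - μ)`, `v' = -u v` on `[0, ∞)`,
with both components positive. -/
structure IsODESol (μ ε : ℝ) (u v : ℝ → ℝ) : Prop where
  u_pos : ∀ t, 0 ≤ t → 0 < u t
  v_pos : ∀ t, 0 ≤ t → 0 < v t
  u_eq : ∀ t, 0 ≤ t → HasDerivAt u (ε⁻¹ * u t * (v t - μ)) t
  v_eq : ∀ t, 0 ≤ t → HasDerivAt v (-(u t * v t)) t

/-- `Q(s) = s - μ ln s`. -/
noncomputable def Q (μ s : ℝ) : ℝ := s - μ * Real.log s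


lemma mono_of_hasDerivAt {f f' : ℝ → ℝ} {a b : ℝ} (hab : a ≤ b)
    (hd : ∀ x ∈ Set.Icc a b, HasDerivAt f (f' x) x)
    (h0 : ∀ x ∈ Set.Icc a b, 0 ≤ f' x) : f a ≤ f b := by
  rcases eq_or_lt_of_le hab with h | h
  · rw [h]
  · have hm : MonotoneOn f (Set.Icc a b) := by
      apply monotoneOn_of_deriv_nonneg (convex_Icc a b)
      · exact fun x hx => (hd x hx).continuousAt.continuousWithinAt
      · rw [interior_Icc]
        exact fun x hx =>
          ((hd x (Set.Ioo_subset_Icc_self hx)).differentiableAt).differentiableWithinAt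
      · rw [interior_Icc]
        intro x hx
        rw [(hd x (Set.Ioo_subset_Icc_self hx)).deriv]
        exact h0 x (Set.Ioo_subset_Icc_self hx)
    exact hm (Set.left_mem_Icc.2 hab) (Set.right_mem_Icc.2 hab) hab

lemma anti_of_hasDerivAt {f f' : ℝ → ℝ} {a b : ℝ} (hab : a ≤ b)
    (hd : ∀ x ∈ Set.Icc a b, HasDerivAt f (f' x) x)
    (h0 : ∀ x ∈ Set.Icc a b, f' x ≤ 0) : f b ≤ f a := by
  have := mono_of_hasDerivAt (f := fun x => -f x) (f' := fun x => -f' x) hab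
    (fun x hx => (hd x hx).neg) (fun x hx => neg_nonneg.2 (h0 x hx))
  simpa using this

lemma Q_hasDerivAt {μ s : ℝ} (hs : s ≠ 0) : HasDerivAt (Q μ) (1 - μ * s⁻¹) s := by
  exact (hasDerivAt_id s).sub ((Real.hasDerivAt_log hs).const_mul μ)

lemma Q_continuousOn {μ : ℝ} : ContinuousOn (Q μ) (Set.Ioi 0) := fun x hx =>
  (Q_hasDerivAt (μ := μ) (ne_of_gt hx)).continuousAt.continuousWithinAt

lemma Q_strictAntiOn {μ : ℝ} (hμ : 0 < μ) : StrictAntiOn (Q μ) (Set.Ioc 0 μ) := by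
  apply strictAntiOn_of_deriv_neg (convex_Ioc 0 μ)
    (Q_continuousOn.mono (fun x hx => hx.1))
  rw [interior_Ioc]
  intro x hx
  rw [(Q_hasDerivAt (ne_of_gt hx.1)).deriv]
  have : 1 < μ * x⁻¹ := by
    rw [← div_eq_mul_inv, lt_div_iff₀ hx.1]
    simpa using hx.2
  linarith
  
lemma Q_strictMonoOn {μ : ℝ} (hμ : 0 < μ) : StrictMonoOn (Q μ) (Set.Ici μ) := by
  apply strictMonoOn_of_deriv_pos (convex_Ici μ)
    (Q_continuousOn.mono (fun x hx => lt_of_lt_of_le hμ hx))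
  rw [interior_Ici]
  intro x hx
  rw [(Q_hasDerivAt (ne_of_gt (lt_trans hμ hx))).deriv]
  have hx0 : 0 < x := lt_trans hμ hx
  have : μ * x⁻¹ < 1 := by
    rw [← div_eq_mul_inv, div_lt_one hx0]
    exact hx
  linarith

lemma Q_min {μ s : ℝ} (hμ : 0 < μ) (hs : 0 < s) : μ - μ * Real.log μ ≤ Q μ s := by
  have h := Real.log_le_sub_one_of_pos (div_pos hs hμ)
  rw [Real.log_div (ne_of_gt hs) (ne_of_gt hμ)] at h
  have := mul_le_mul_of_nonneg_left h (le_of_lt hμ)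
  unfold Q
  have hμ' : μ ≠ 0 := ne_of_gt hμ
  have h2 : μ * (s / μ - 1) = s - μ := by field_simp
  rw [h2, mul_sub] at this
  linarith

lemma Q_anti_le {μ a b : ℝ} (hμ : 0 < μ) (ha : 0 < a) (hab : a ≤ b) (hb : b ≤ μ) :
    Q μ b ≤ Q μ a := by
  rcases eq_or_lt_of_le hab with rfl | h
  · exact le_refl _
  · exact (Q_strictAntiOn hμ ⟨ha, le_trans hab hb⟩ ⟨lt_of_lt_of_le ha hab, hb⟩ h).le

lemma Q_mono_le {μ a b : ℝ} (hμ : 0 < μ) (ha : μ ≤ a) (hab : a ≤ b) : Q μ a ≤ Q μ b := by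
  rcases eq_or_lt_of_le hab with rfl | h
  · exact le_refl _
  · exact (Q_strictMonoOn hμ (Set.mem_Ici.2 ha) (Set.mem_Ici.2 (le_trans ha hab)) h).le

namespace IsODESol
variable {μ ε : ℝ} {u v : ℝ → ℝ} (h : IsODESol μ ε u v)

lemma v_anti (h : IsODESol μ ε u v) {s t : ℝ} (hs : 0 ≤ s) (hst : s ≤ t) : v t ≤ v s := by
  refine anti_of_hasDerivAt (f' := fun x => -(u x * v x)) hst
    (fun x hx => h.v_eq x (le_trans hs hx.1)) (fun x hx => ?_)
  have h0x : (0:ℝ) ≤ x := le_trans hs hx.1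
  have := h.u_pos x h0x
  have := h.v_pos x h0x
  nlinarith

lemma psi_deriv (h : IsODESol μ ε u v) (hε : ε ≠ 0) {x : ℝ} (hx : 0 ≤ x) :
    HasDerivAt (fun y => ε * Real.log (u y)) (v x - μ) x := by
  have hu := h.u_pos x hx
  have := ((h.u_eq x hx).log (ne_of_gt hu)).const_mul ε
  refine this.congr_deriv ?_
  field_simp

lemma logv_deriv (h : IsODESol μ ε u v) {x : ℝ} (hx : 0 ≤ x) :
    HasDerivAt (fun y => Real.log (v y)) (-(u x)) x := by
  have hv := h.v_pos x hx
  have := (h.v_eq x hx).log (ne_of_gt hv)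
  convert this using 1
  field_simp

lemma cons (h : IsODESol μ ε u v) (hε : 0 < ε) {t : ℝ} (ht : 0 ≤ t) :
    ε * u t + Q μ (v t) = ε * u 0 + Q μ (v 0) := by
  set F : ℝ → ℝ := fun x => ε * u x + (v x - μ * Real.log (v x)) with hF
  have hd : ∀ x ∈ Set.Icc (0:ℝ) t, HasDerivAt F ((fun _ => (0:ℝ)) x) x := by
    intro x hx
    have hvx := h.v_pos x hx.1
    have h1 := (h.u_eq x hx.1).const_mul ε
    have h2 := (h.v_eq x hx.1).sub (((h.v_eq x hx.1).log (ne_of_gt hvx)).const_mul μ)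
    have h3 := h1.add h2
    refine h3.congr_deriv ?_
    have hε' : ε ≠ 0 := ne_of_gt hε
    have hv' : v x ≠ 0 := ne_of_gt hvx
    field_simp
    ring
  have h1 := mono_of_hasDerivAt (ht) hd (fun x _ => le_refl 0)
  have h2 := anti_of_hasDerivAt ht hd (fun x _ => le_refl 0)
  have : F t = F 0 := le_antisymm h2 h1
  simpa [hF, Q] using this

lemma psi_le (h : IsODESol μ ε u v) (hε : 0 < ε) {a b : ℝ} (ha : 0 ≤ a) (hab : a ≤ b) :
    ε * Real.log (u b) ≤ ε * Real.log (u a) + (b - a) * (v a - μ) := by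
  have := anti_of_hasDerivAt (f := fun x => ε * Real.log (u x) - x * (v a - μ))
    (f' := fun x => (v x - μ) - (v a - μ)) hab
    (fun x hx => ((h.psi_deriv (ne_of_gt hε) (le_trans ha hx.1)).sub
      ((hasDerivAt_id x).mul_const (v a - μ) |>.congr_deriv (by ring))))
    (fun x hx => by have := h.v_anti ha hx.1; linarith)
  linarith [this]

lemma psi_ge (h : IsODESol μ ε u v) (hε : 0 < ε) {a b : ℝ} (ha : 0 ≤ a) (hab : a ≤ b) :
    ε * Real.log (u a) + (b - a) * (v b - μ) ≤ ε * Real.log (u b) := by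
  have := mono_of_hasDerivAt (f := fun x => ε * Real.log (u x) - x * (v b - μ))
    (f' := fun x => (v x - μ) - (v b - μ)) hab
    (fun x hx => ((h.psi_deriv (ne_of_gt hε) (le_trans ha hx.1)).sub
      ((hasDerivAt_id x).mul_const (v b - μ) |>.congr_deriv (by ring))))
    (fun x hx => by have := h.v_anti (le_trans ha hx.1) hx.2; linarith)
  linarith [this]

lemma v_drop (h : IsODESol μ ε u v) {a b m : ℝ} (ha : 0 ≤ a) (hab : a ≤ b)
    (hm : ∀ x ∈ Set.Icc a b, m ≤ u x * v x) : v b ≤ v a - (b - a) * m := by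
  have := anti_of_hasDerivAt (f := fun x => v x + x * m)
    (f' := fun x => -(u x * v x) + m) hab
    (fun x hx => ((h.v_eq x (le_trans ha hx.1)).add
      ((hasDerivAt_id x).mul_const m |>.congr_deriv (by ring))))
    (fun x hx => by have := hm x hx; linarith)
  linarith [this]

lemma logv_ge (h : IsODESol μ ε u v) {a b M : ℝ} (ha : 0 ≤ a) (hab : a ≤ b)
    (hM : ∀ x ∈ Set.Icc a b, u x ≤ M) :
    Real.log (v a) - (b - a) * M ≤ Real.log (v b) := by
  have := mono_of_hasDerivAt (f := fun x => Real.log (v x) + x * M)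
    (f' := fun x => -(u x) + M) hab
    (fun x hx => ((h.logv_deriv (le_trans ha hx.1)).add
      ((hasDerivAt_id x).mul_const M |>.congr_deriv (by ring))))
    (fun x hx => by have := hM x hx; linarith)
  linarith [this]

end IsODESol

set_option maxHeartbeats 2000000 in
/-- Parts (i) and (iii) of Theorem 2.1: ahead of the front (`v⁰ > μ`), the nutrient
stays at `v⁰` before the jump time `τ = -φ⁰/(v⁰ - μ)` and equals the lower branch
`v⁰₋` afterwards. -/
theorem nutrient_jump (μ QM : ℝ) (hμ : 0 < μ)
    (u v : ℝ → ℝ → ℝ) (φ0 v0 : ℝ → ℝ) (φlim vlim vminus : ℝ)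
    (hsol : ∀ ε ∈ Set.Ioc (0:ℝ) 1, IsODESol μ ε (u ε) (v ε))
    (hu0 : ∀ ε ∈ Set.Ioc (0:ℝ) 1, u ε 0 = Real.exp (φ0 ε / ε))
    (hv0 : ∀ ε ∈ Set.Ioc (0:ℝ) 1, v ε 0 = v0 ε)
    (hQM : ∀ ε ∈ Set.Ioc (0:ℝ) 1, ε * u ε 0 + Q μ (v0 ε) ≤ QM)
    (hφconv : Tendsto φ0 (nhdsWithin 0 (Set.Ioc 0 1)) (𝓝 φlim))
    (hφneg : φlim < 0)
    (hvconv : Tendsto v0 (nhdsWithin 0 (Set.Ioc 0 1)) (𝓝 vlim))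
    (hvlim : μ < vlim)
    (hm0 : 0 < vminus) (hmμ : vminus < μ) (hQm : Q μ vminus = Q μ vlim) :
    (∀ t, 0 ≤ t → t < -φlim / (vlim - μ) →
        Tendsto (fun ε => v ε t) (nhdsWithin 0 (Set.Ioc 0 1)) (𝓝 vlim)) ∧
    (∀ t, -φlim / (vlim - μ) < t →
        Tendsto (fun ε => v ε t) (nhdsWithin 0 (Set.Ioc 0 1)) (𝓝 vminus)) := by
  set l := nhdsWithin (0:ℝ) (Set.Ioc 0 1) with hl
  have hvμ : (0:ℝ) < vlim - μ := sub_pos.2 hvlim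
  have hmem : ∀ᶠ ε in l, ε ∈ Set.Ioc (0:ℝ) 1 := self_mem_nhdsWithin
  have hε0 : Tendsto (fun ε : ℝ => ε) l (𝓝 0) := tendsto_id.mono_right nhdsWithin_le_nhds
  have hvlim0 : (0:ℝ) < vlim := lt_trans hμ hvlim
  -- part 1
  have part1 : ∀ t, 0 ≤ t → t < -φlim / (vlim - μ) →
      Tendsto (fun ε => v ε t) l (𝓝 vlim) := by
    intro t ht htτ
    have hd : φlim + t * (vlim - μ) < 0 := by
      have := (lt_div_iff₀ hvμ).1 htτ
      linarith
    set d := φlim + t * (vlim - μ) with hdd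
    -- lower bound function
    have hexp : Tendsto (fun ε : ℝ => d / (2 * ε)) l atBot := by
      have h1 : Tendsto (fun ε : ℝ => ε⁻¹) l atTop :=
        tendsto_inv_nhdsGT_zero.mono_left
          (nhdsWithin_mono 0 (fun x hx => hx.1))
      have h2 : Tendsto (fun ε : ℝ => (d/2) * ε⁻¹) l atBot :=
        Filter.Tendsto.neg_mul_atTop (by linarith : d/2 < 0) tendsto_const_nhds h1
      refine h2.congr (fun ε => ?_)
      rw [div_eq_mul_inv d (2*ε), mul_inv]
      ring
    have hg : Tendsto (fun ε : ℝ => v0 ε * Real.exp (-(t * Real.exp (d / (2 * ε))))) l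
        (𝓝 vlim) := by
      have h3 : Tendsto (fun ε : ℝ => Real.exp (d / (2 * ε))) l (𝓝 0) :=
        Real.tendsto_exp_atBot.comp hexp
      have h4 : Tendsto (fun ε : ℝ => Real.exp (-(t * Real.exp (d / (2 * ε))))) l (𝓝 1) := by
        have h5 : Tendsto (fun ε : ℝ => -(t * Real.exp (d / (2 * ε)))) l (𝓝 0) := by
          have := (h3.const_mul t).neg
          simpa using this
        have := (Real.continuous_exp.tendsto 0).comp h5
        simpa [Function.comp_def] using this
      have := hvconv.mul h4
      simpa using this
    have hub : ∀ᶠ ε in l, v ε t ≤ v0 ε := by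
      filter_upwards [hmem] with ε hε
      have sol := hsol ε hε
      have := sol.v_anti (le_refl 0) ht
      rwa [hv0 ε hε] at this
    have hev2 : ∀ᶠ ε in l, φ0 ε + t * (v0 ε - μ) ≤ d / 2 := by
      have htend : Tendsto (fun ε => φ0 ε + t * (v0 ε - μ)) l (𝓝 d) := by
        rw [hdd]
        exact hφconv.add (((hvconv.sub_const μ).const_mul t))
      exact htend.eventually (eventually_le_nhds (by linarith))
    have hev3 : ∀ᶠ ε in l, μ ≤ v0 ε := hvconv.eventually (eventually_ge_nhds hvlim)
    have hlb : ∀ᶠ ε in l, v0 ε * Real.exp (-(t * Real.exp (d / (2 * ε)))) ≤ v ε t := by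
      filter_upwards [hmem, hev2, hev3] with ε hε h2 h3
      have sol := hsol ε hε
      have hε0' : (0:ℝ) < ε := hε.1
      have hψ0 : ε * Real.log (u ε 0) = φ0 ε := by
        rw [hu0 ε hε, Real.log_exp, mul_div_cancel₀ _ (ne_of_gt hε0')]
      have hM : ∀ x ∈ Set.Icc (0:ℝ) t, u ε x ≤ Real.exp (d / (2 * ε)) := by
        intro x hx
        have h5 := sol.psi_le hε0' (le_refl 0) hx.1
        rw [hψ0, hv0 ε hε] at h5
        have h6 : ε * Real.log (u ε x) ≤ d / 2 := by
          have : x * (v0 ε - μ) ≤ t * (v0 ε - μ) :=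
            mul_le_mul_of_nonneg_right hx.2 (by linarith)
          simp only [sub_zero] at h5
          linarith
        have h7 : Real.log (u ε x) ≤ d / (2 * ε) := by
          rw [le_div_iff₀ (by linarith : (0:ℝ) < 2 * ε)]
          nlinarith
        calc u ε x = Real.exp (Real.log (u ε x)) :=
              (Real.exp_log (sol.u_pos x hx.1)).symm
          _ ≤ Real.exp (d / (2 * ε)) := Real.exp_le_exp.2 h7
      have h8 := sol.logv_ge (le_refl 0) ht hM
      have hv0pos : 0 < v0 ε := by linarith
      rw [hv0 ε hε, sub_zero] at h8
      calc v0 ε * Real.exp (-(t * Real.exp (d / (2 * ε))))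
          = Real.exp (Real.log (v0 ε) - t * Real.exp (d / (2 * ε))) := by
            rw [Real.exp_sub, Real.exp_log hv0pos, Real.exp_neg, div_eq_mul_inv]
            ring
        _ ≤ Real.exp (Real.log (v ε t)) := Real.exp_le_exp.2 (by linarith)
        _ = v ε t := Real.exp_log (sol.v_pos t ht)
    exact tendsto_of_tendsto_of_tendsto_of_le_of_le' hg hvconv hlb hub
  refine ⟨part1, ?_⟩
  intro t ht
  obtain ⟨τ, hτdef⟩ : ∃ x : ℝ, x = -φlim / (vlim - μ) := ⟨_, rfl⟩
  rw [← hτdef] at ht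
  have hτpos : 0 < τ := hτdef ▸ div_pos (neg_pos.2 hφneg) hvμ
  have hτeq : τ * (vlim - μ) = -φlim := by rw [hτdef]; exact div_mul_cancel₀ _ (ne_of_gt hvμ)
  have ht0 : 0 < t := lt_trans hτpos ht
  obtain ⟨θ, hθdef⟩ : ∃ x : ℝ, x = (vlim - μ) / 2 := ⟨_, rfl⟩
  have hθpos : 0 < θ := by rw [hθdef]; linarith
  obtain ⟨β, hβdef⟩ : ∃ x : ℝ, x = (t - τ) * θ / 2 := ⟨_, rfl⟩
  have htτ : 0 < t - τ := by linarith
  have hβpos : 0 < β := by rw [hβdef]; positivity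
  obtain ⟨C, hCdef⟩ : ∃ x : ℝ, x = QM - (μ - μ * Real.log μ) := ⟨_, rfl⟩
  have hC : 0 < C := by
    have h1mem : (1:ℝ) ∈ Set.Ioc (0:ℝ) 1 := ⟨one_pos, le_refl 1⟩
    have sol1 := hsol 1 h1mem
    have h1 := hQM 1 h1mem
    have h2 : 0 < v0 1 := by rw [← hv0 1 h1mem]; exact sol1.v_pos 0 le_rfl
    have h3 := Q_min (μ := μ) hμ h2
    have h4 := sol1.u_pos 0 le_rfl
    rw [hCdef]; linarith
  rw [Metric.tendsto_nhds]
  intro r hr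
  obtain ⟨δ, hδdef⟩ : ∃ x : ℝ, x = min (r/2) (min ((μ - vminus)/2) (vminus/2)) := ⟨_, rfl⟩
  have hδ1 : δ ≤ (μ - vminus)/2 := by
    rw [hδdef]; exact le_trans (min_le_right _ _) (min_le_left _ _)
  have hδ2 : δ ≤ vminus/2 := by
    rw [hδdef]; exact le_trans (min_le_right _ _) (min_le_right _ _)
  have hδ3 : δ ≤ r/2 := by rw [hδdef]; exact min_le_left _ _
  have hδpos : 0 < δ := by
    rw [hδdef]
    refine lt_min (by linarith) (lt_min (by linarith) (by linarith))
  have hδr : δ < r := by linarith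
  have hδμ : vminus + δ < μ := by linarith
  have hδ0 : 0 < vminus - δ := by linarith
  obtain ⟨c₀, hc0def⟩ : ∃ x : ℝ, x = Q μ vminus - max (Q μ (vminus + δ)) (Q μ (μ + θ)) := ⟨_, rfl⟩
  have hQa : Q μ (vminus + δ) < Q μ vminus :=
    Q_strictAntiOn hμ ⟨hm0, hmμ.le⟩ ⟨by linarith, hδμ.le⟩ (by linarith)
  have hQb : Q μ (μ + θ) < Q μ vminus := by
    rw [hQm]
    exact Q_strictMonoOn hμ (by simp [hθpos.le] : μ + θ ∈ Set.Ici μ)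
      (Set.mem_Ici.2 hvlim.le) (by rw [hθdef]; linarith)
  have hc0 : 0 < c₀ := by
    rw [hc0def]
    have := max_lt hQa hQb
    linarith
  have hmax : Q μ vminus - c₀ = max (Q μ (vminus + δ)) (Q μ (μ + θ)) := by
    rw [hc0def]; ring
  obtain ⟨L, hLdef⟩ : ∃ x : ℝ, x = c₀ / 2 * (vminus + δ) := ⟨_, rfl⟩
  have hL : 0 < L := by rw [hLdef]; positivity
  obtain ⟨K, hKdef⟩ : ∃ x : ℝ, x = (μ + θ) / L + 1 := ⟨_, rfl⟩
  have hKpos : 0 < K := by rw [hKdef]; positivity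
  have hKL : μ + θ < K * L := by
    rw [hKdef, add_mul, div_mul_cancel₀ _ (ne_of_gt hL)]
    linarith
  obtain ⟨τ', hτ'def⟩ : ∃ x : ℝ, x = max (τ/2) (τ - β/(4*(vlim - μ))) := ⟨_, rfl⟩
  have hτ'pos : 0 < τ' := by
    rw [hτ'def]; exact lt_of_lt_of_le (half_pos hτpos) (le_max_left _ _)
  have hτ'le : τ' < τ := by
    rw [hτ'def]
    refine max_lt (by linarith) ?_
    have : 0 < β/(4*(vlim-μ)) := by positivity
    linarith
  have hτ'τ : (τ - τ') * (vlim - μ) ≤ β / 4 := by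
    have h1 : τ - β/(4*(vlim-μ)) ≤ τ' := by rw [hτ'def]; exact le_max_right _ _
    have h2 : τ - τ' ≤ β/(4*(vlim-μ)) := by linarith
    calc (τ-τ')*(vlim-μ) ≤ β/(4*(vlim-μ))*(vlim-μ) :=
          mul_le_mul_of_nonneg_right h2 hvμ.le
      _ = β/4 := by field_simp
  obtain ⟨γ, hγdef⟩ : ∃ x : ℝ, x = β / (4 * (τ + 1)) := ⟨_, rfl⟩
  have hγpos : 0 < γ := by rw [hγdef]; positivity
  have hτ'γ : τ' * γ ≤ β / 4 := by
    have h1 : τ' * γ ≤ (τ+1) * γ := mul_le_mul_of_nonneg_right (by linarith) hγpos.le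
    have h2 : (τ+1) * γ = β/4 := by
      rw [hγdef]; field_simp
    linarith
  have htτ' : τ' < t := lt_trans hτ'le ht
  -- eventual facts
  have hQcont : ContinuousAt (Q μ) vlim := (Q_hasDerivAt (ne_of_gt hvlim0)).continuousAt
  have hE : Tendsto (fun ε => ε * u ε 0 + Q μ (v0 ε)) l (𝓝 (Q μ vminus)) := by
    have h1 : Tendsto (fun ε => Q μ (v0 ε)) l (𝓝 (Q μ vlim)) := hQcont.tendsto.comp hvconv
    have h3 : Tendsto (fun ε : ℝ => φ0 ε * ε⁻¹) l atBot :=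
      Filter.Tendsto.neg_mul_atTop hφneg hφconv
        (tendsto_inv_nhdsGT_zero.mono_left (nhdsWithin_mono 0 fun x hx => hx.1))
    have h4 : Tendsto (fun ε : ℝ => ε * Real.exp (φ0 ε / ε)) l (𝓝 0) := by
      have h5 := hε0.mul (Real.tendsto_exp_atBot.comp h3)
      simp only [mul_zero] at h5
      refine h5.congr (fun ε => ?_)
      rw [Function.comp_apply, div_eq_mul_inv]
    have h2 : Tendsto (fun ε => ε * u ε 0) l (𝓝 0) := by
      refine h4.congr' ?_
      filter_upwards [hmem] with ε hε
      rw [hu0 ε hε]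
    have h6 := h2.add h1
    rw [zero_add, ← hQm] at h6
    exact h6
  have hgap : Q μ vminus < Q μ (vminus - δ) :=
    Q_strictAntiOn hμ ⟨hδ0, by linarith⟩ ⟨hm0, hmμ.le⟩ (by linarith)
  have hEev : ∀ᶠ ε in l, Q μ vminus - c₀/4 ≤ ε * u ε 0 + Q μ (v0 ε) ∧
      ε * u ε 0 + Q μ (v0 ε) ≤ (Q μ vminus + Q μ (vminus - δ))/2 :=
    (hE.eventually (eventually_ge_nhds (by linarith))).and
      (hE.eventually (eventually_le_nhds (by linarith)))
  have hφev : ∀ᶠ ε in l, φlim - β/4 ≤ φ0 ε :=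
    hφconv.eventually (eventually_ge_nhds (by linarith))
  have hvτ'ev : ∀ᶠ ε in l, vlim - γ ≤ v ε τ' :=
    (part1 τ' hτ'pos.le (by rw [← hτdef]; exact hτ'le)).eventually (eventually_ge_nhds (by linarith))
  have hψub : ∀ᶠ ε in l, ε * Real.log C - ε * Real.log ε < β := by
    have h2 : Tendsto (fun ε : ℝ => ε * Real.log ε) l (𝓝 0) := by
      have h0 : Tendsto (fun x : ℝ => x * Real.log x) (𝓝 0) (𝓝 (0 * Real.log 0)) :=
        Real.continuous_mul_log.tendsto 0
      rw [zero_mul] at h0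
      exact h0.mono_left nhdsWithin_le_nhds
    have h3 := (hε0.mul_const (Real.log C)).sub h2
    simp only [zero_mul, sub_zero, mul_zero] at h3
    exact h3.eventually (eventually_lt_nhds hβpos)
  have hεsm : ∀ᶠ ε in l, ε * K ≤ (t - τ')/2 ∧ ε * (K * θ) ≤ β/4 := by
    have h1 : Tendsto (fun ε : ℝ => ε * K) l (𝓝 0) := by
      simpa using hε0.mul_const K
    have h2 : Tendsto (fun ε : ℝ => ε * (K * θ)) l (𝓝 0) := by
      simpa using hε0.mul_const (K * θ)
    exact (h1.eventually (eventually_le_nhds (by linarith))).and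
      (h2.eventually (eventually_le_nhds (by linarith)))
  -- main argument
  filter_upwards [hmem, hEev, hφev, hvτ'ev, hψub, hεsm] with ε hε hE2 hφ2 hvτ' hψu hεs
  obtain ⟨hElo, hEhi⟩ := hE2
  obtain ⟨hεs1, hεs2⟩ := hεs
  have sol := hsol ε hε
  have hεp : 0 < ε := hε.1
  have hcons : ∀ s, 0 ≤ s → ε * u ε s + Q μ (v ε s) = ε * u ε 0 + Q μ (v0 ε) := by
    intro s hs
    rw [← hv0 ε hε]
    exact sol.cons hεp hs
  rw [Real.dist_eq]
  have hlow : vminus - δ ≤ v ε t := by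
    by_contra hcon
    push_neg at hcon
    have hvt := sol.v_pos t ht0.le
    have h1 : Q μ (vminus - δ) < Q μ (v ε t) :=
      Q_strictAntiOn hμ ⟨hvt, by linarith⟩ ⟨hδ0, by linarith⟩ hcon
    have h2 := hcons t ht0.le
    have hmul : 0 < ε * u ε t := mul_pos hεp (sol.u_pos t ht0.le)
    linarith
  have hhigh : v ε t ≤ vminus + δ := by
    by_contra hcon
    push_neg at hcon
    obtain ⟨T, hTdef⟩ : ∃ x : ℝ, x = t - ε * K := ⟨_, rfl⟩
    have hτ'T : τ' ≤ T := by
      rw [hTdef]; linarith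
    have hT0 : 0 ≤ T := le_trans hτ'pos.le hτ'T
    have hεK : 0 ≤ ε * K := mul_nonneg hεp.le hKpos.le
    have hTt : T ≤ t := by rw [hTdef]; linarith
    have hA : ∀ s ∈ Set.Icc 0 T, μ + θ ≤ v ε s := by
      intro s hs
      by_contra hvs
      push_neg at hvs
      have hst : s ≤ t := le_trans hs.2 hTt
      have key : ∀ x ∈ Set.Icc s t, L / ε ≤ u ε x * v ε x := by
        intro x hx
        have hx0 : (0:ℝ) ≤ x := le_trans hs.1 hx.1
        have hv1 : v ε x ≤ μ + θ := le_trans (sol.v_anti hs.1 hx.1) hvs.le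
        have hv2 : vminus + δ ≤ v ε x := le_trans hcon.le (sol.v_anti hx0 hx.2)
        have hQx : Q μ (v ε x) ≤ Q μ vminus - c₀ := by
          rcases le_or_gt (v ε x) μ with hcase | hcase
          · have h3 : Q μ (v ε x) ≤ Q μ (vminus + δ) :=
              Q_anti_le hμ (by linarith) hv2 hcase
            have h4 := le_max_left (Q μ (vminus + δ)) (Q μ (μ + θ))
            linarith [hmax]
          · have h3 : Q μ (v ε x) ≤ Q μ (μ + θ) := Q_mono_le hμ hcase.le hv1
            have h4 := le_max_right (Q μ (vminus + δ)) (Q μ (μ + θ))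
            linarith [hmax]
        have h2 := hcons x hx0
        have h3 : c₀/2 ≤ ε * u ε x := by linarith
        have hux : c₀/2/ε ≤ u ε x := by
          rw [div_le_iff₀ hεp]
          linarith
        calc L / ε = c₀/2/ε * (vminus + δ) := by rw [hLdef]; ring
          _ ≤ u ε x * v ε x :=
              mul_le_mul hux hv2 (by linarith) (sol.u_pos x hx0).le
      have hdrop := sol.v_drop hs.1 hst key
      have h4 : ε * K ≤ t - s := by
        have := hs.2
        rw [hTdef] at this
        linarith
      have h5 : K * L ≤ (t - s) * (L / ε) := by
        have h6 : (ε*K) * (L/ε) ≤ (t-s) * (L/ε) :=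
          mul_le_mul_of_nonneg_right h4 (by positivity)
        have h7 : (ε*K) * (L/ε) = K * L := by
          field_simp
        linarith
      have h6 := sol.v_pos t ht0.le
      have h8 : v ε s < μ + θ := hvs
      linarith
    -- step B: lower bound on ε log u(T)
    have hψ0 : ε * Real.log (u ε 0) = φ0 ε := by
      rw [hu0 ε hε, Real.log_exp, mul_div_cancel₀ _ (ne_of_gt hεp)]
    have hB1 := sol.psi_ge hεp (le_refl 0) hτ'pos.le
    have hB2 := sol.psi_ge hεp hτ'pos.le hτ'T
    rw [hψ0] at hB1
    simp only [sub_zero] at hB1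
    have hvT : μ + θ ≤ v ε T := hA T ⟨hT0, le_refl T⟩
    have hvτ'2 : vlim - γ ≤ v ε τ' := hvτ'
    have hτ'v' : τ' * (vlim - γ - μ) ≤ τ' * (v ε τ' - μ) :=
      mul_le_mul_of_nonneg_left (by linarith) hτ'pos.le
    have hTθ : (T - τ') * θ ≤ (T - τ') * (v ε T - μ) :=
      mul_le_mul_of_nonneg_left (by linarith) (by linarith)
    have hψT : φ0 ε + τ' * (vlim - γ - μ) + (T - τ') * θ ≤ ε * Real.log (u ε T) := by
      linarith
    have harith : β ≤ ε * Real.log (u ε T) := by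
      have e2 : (T - τ') * θ = (t - τ) * θ + (τ - τ') * θ - ε * (K * θ) := by
        rw [hTdef]; ring
      have e3 : 0 ≤ (τ - τ') * θ := mul_nonneg (by linarith) hθpos.le
      have e4 : (t - τ) * θ = 2 * β := by rw [hβdef]; ring
      have e5 : τ' * (vlim - γ - μ) = τ' * (vlim - μ) - τ' * γ := by ring
      have e6 : τ' * (vlim - μ) = τ * (vlim - μ) - (τ - τ') * (vlim - μ) := by ring
      linarith [hτeq, hτ'τ, hτ'γ, hεs2, hφ2, hψT]
    -- step C: upper bound
    have hQlow := Q_min (μ := μ) hμ (sol.v_pos T hT0)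
    have hCbd : ε * u ε T ≤ C := by
      have h1 := hcons T hT0
      have h2 := hQM ε hε
      rw [hCdef]
      linarith
    have huT : u ε T ≤ C / ε := by
      rw [le_div_iff₀ hεp]
      linarith
    have hlogT : Real.log (u ε T) ≤ Real.log C - Real.log ε := by
      calc Real.log (u ε T) ≤ Real.log (C/ε) :=
            Real.log_le_log (sol.u_pos T hT0) huT
        _ = _ := Real.log_div (ne_of_gt hC) (ne_of_gt hεp)
    have hfin : ε * Real.log (u ε T) ≤ ε * Real.log C - ε * Real.log ε := by
      have := mul_le_mul_of_nonneg_left hlogT hεp.le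
      linarith [this, (by ring : ε * (Real.log C - Real.log ε) = ε * Real.log C - ε * Real.log ε)]
    linarith
  have habs : |v ε t - vminus| ≤ δ := abs_le.2 ⟨by linarith, by linarith⟩
  linarith
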